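/- Let ω ∈ ℤ₂ be the root of x² - x + 2 = 0 with v₂(ω) = 1, and set ω̄ = 1 - ω. Then: (a) there exists Ω ∈ ℤ₂ with Ω ≡ 3 (mod 4) such that v₂(ω̄^(2k-1) + (1-2ω)) = 3 + v₂(k - Ω) for every integer k ≥ 1; and (b) there exists Ω₈ ∈ ℤ₂ with Ω₈ ≡ 2 (mod 4) such that v₂(ω̄^(2k-1) + 9·(1-2ω)) = 3 + v₂(k - Ω₈) for every integer k ≥ 1. Here k is regarded as an element of ℤ₂, and congruence mod 4 means the difference lies in 4ℤ₂. -/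

import Mathlib

open PadicInt Finset

private lemma hp2 : ((2:ℕ):ℤ_[2]) = 2 := by norm_num

private lemma two_not_dvd_one : ¬ (2:ℤ_[2]) ∣ 1 := by
  intro h
  have h2 := (PadicInt.norm_lt_one_iff_dvd (p := 2) 1)
  rw [hp2] at h2
  have := h2.mpr h
  simp at this

private lemma prime_two' : Prime (2:ℤ_[2]) := by
  have := PadicInt.prime_p (p := 2); rwa [hp2] at this

private lemma odd_add_odd (x y : ℤ_[2]) (hx : ¬ (2:ℤ_[2]) ∣ x) (hy : ¬ (2:ℤ_[2]) ∣ y) :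
    (2:ℤ_[2]) ∣ x + y := by
  have hker : ∀ z : ℤ_[2], (2:ℤ_[2]) ∣ z ↔ PadicInt.toZMod z = 0 := by
    intro z
    rw [← RingHom.mem_ker, PadicInt.ker_toZMod, PadicInt.maximalIdeal_eq_span_p,
      Ideal.mem_span_singleton, hp2]
  have key : ∀ z : ℤ_[2], ¬ (2:ℤ_[2]) ∣ z → PadicInt.toZMod z = 1 := by
    intro z hz
    have h1 : ∀ w : ZMod 2, w ≠ 0 → w = 1 := by decide
    exact h1 _ (fun h => hz ((hker z).mpr h))
  rw [hker, map_add, key x hx, key y hy]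
  decide

private lemma odd_mul' {x y : ℤ_[2]} (hx : ¬ (2:ℤ_[2]) ∣ x) (hy : ¬ (2:ℤ_[2]) ∣ y) :
    ¬ (2:ℤ_[2]) ∣ (x * y) := by
  intro h
  rcases prime_two'.dvd_mul.mp h with h | h
  exacts [hx h, hy h]

private lemma odd_pow' {x : ℤ_[2]} (hx : ¬ (2:ℤ_[2]) ∣ x) (n : ℕ) :
    ¬ (2:ℤ_[2]) ∣ x ^ n := by
  intro h
  exact hx (prime_two'.dvd_of_dvd_pow h)

private lemma dvd_iff_le_val {x : ℤ_[2]} (hx : x ≠ 0) (n : ℕ) :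
    (2:ℤ_[2])^n ∣ x ↔ (n:ℤ) ≤ x.valuation := by
  rw [Nat.cast_le, ← PadicInt.mem_span_pow_iff_le_valuation x hx n, Ideal.mem_span_singleton, hp2]

private lemma int_dvd_iff (n : ℕ) (a : ℤ) : (2:ℤ_[2])^n ∣ (a : ℤ_[2]) ↔ (2^n : ℤ) ∣ a := by
  rw [← hp2, PadicInt.pow_p_dvd_int_iff]; norm_num

private lemma dvd_of_norm_le {n : ℕ} {x : ℤ_[2]} (h : ‖x‖ ≤ (2:ℝ)^(-n:ℤ)) :
    (2:ℤ_[2])^n ∣ x := by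
  rw [show ((2:ℝ)) = ((2:ℕ):ℝ) by norm_num, PadicInt.norm_le_pow_iff_mem_span_pow,
    Ideal.mem_span_singleton, hp2] at h
  exact h

private lemma norm_le_of_dvd {n : ℕ} {x : ℤ_[2]} (h : (2:ℤ_[2])^n ∣ x) :
    ‖x‖ ≤ (2:ℝ)^(-n:ℤ) := by
  rw [show ((2:ℝ)) = ((2:ℕ):ℝ) by norm_num, PadicInt.norm_le_pow_iff_mem_span_pow,
    Ideal.mem_span_singleton, hp2]
  exact h

/-- valuation of `2^n * t` with `t` odd -/
private lemma val_of_E {x : ℤ_[2]} {n : ℕ} {t : ℤ_[2]} (ht : ¬ (2:ℤ_[2]) ∣ t)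
    (hx : x = 2^n * t) : x.valuation = n := by
  have ht0 : t ≠ 0 := by rintro rfl; exact ht (dvd_zero _)
  have htn : ‖t‖ = 1 := by
    rcases lt_or_eq_of_le t.norm_le_one with h | h
    · exfalso; apply ht; rw [← hp2, ← PadicInt.norm_lt_one_iff_dvd]; exact h
    · exact h
  have htv : t.valuation = 0 := by
    by_contra hv
    have h1 : (1:ℤ) ≤ t.valuation := by omega
    have := (PadicInt.norm_le_pow_iff_le_valuation t ht0 1).mpr (by exact_mod_cast h1)
    rw [htn] at this
    norm_num at this
  have := PadicInt.valuation_p_pow_mul (p := 2) n t ht0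
  rw [hp2] at this
  rw [hx, this, htv, add_zero]

private lemma not_dvd_succ_of_E {x : ℤ_[2]} {n : ℕ} {t : ℤ_[2]} (ht : ¬ (2:ℤ_[2]) ∣ t)
    (hx : x = 2^n * t) : ¬ (2:ℤ_[2])^(n+1) ∣ x := by
  intro h
  apply ht
  rw [hx, pow_succ] at h
  exact (mul_dvd_mul_iff_left (a := (2:ℤ_[2])^n) (pow_ne_zero n two_ne_zero)).mp h

private lemma eps_setup (ω : ℤ_[2]) (hroot : ω ^ 2 - ω + 2 = 0) (hval : ω.valuation = 1) :
    ∃ ε u : ℤ_[2], ω = 2*ε ∧ ε = 3 + 16*u ∧ ¬ (2:ℤ_[2]) ∣ ε := by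
  have hω0 : ω ≠ 0 := by
    rintro rfl
    rw [show (0:ℤ_[2])^2 - 0 + 2 = 2 by ring] at hroot
    exact two_ne_zero hroot
  have h2ω : (2:ℤ_[2]) ∣ ω := by
    have := (dvd_iff_le_val hω0 1).mpr (by rw [hval])
    rwa [pow_one] at this
  obtain ⟨ε, hωε⟩ := h2ω
  have heps : 2*ε^2 - ε + 1 = 0 := by
    have h2 : (2:ℤ_[2]) * (2*ε^2 - ε + 1) = 0 := by
      rw [hωε] at hroot; linear_combination hroot
    exact (mul_eq_zero.mp h2).resolve_left two_ne_zero
  have h1 : ε = 2*ε^2 + 1 := by linear_combination -heps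
  have hodd : ¬ (2:ℤ_[2]) ∣ ε := by
    intro h
    apply two_not_dvd_one
    have : (1:ℤ_[2]) = ε - 2*ε^2 := by linear_combination -h1
    rw [this]
    exact dvd_sub h (by rw [show (2:ℤ_[2])*ε^2 = ε*(2*ε) by ring]; exact Dvd.dvd.mul_left ⟨ε, rfl⟩ ε)
  have hodd2 : ¬ (2:ℤ_[2]) ∣ ε^2 := odd_pow' hodd 2
  obtain ⟨m, hm⟩ := odd_add_odd (ε^2) 1 hodd2 two_not_dvd_one
  refine ⟨ε, ε^2 * m, hωε, ?_, hodd⟩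
  linear_combination (4*ε^2+2*ε+3) * h1 + (8*ε^2) * hm

private lemma odd_geom_sum {Q : ℤ_[2]} (hQ : ¬ (2:ℤ_[2]) ∣ Q) {c : ℕ} (hc : ¬ 2 ∣ c) :
    ¬ (2:ℤ_[2]) ∣ ∑ i ∈ Finset.range c, Q^i := by
  obtain ⟨r, rfl⟩ : ∃ r, c = 2*r + 1 := ⟨c/2, by omega⟩
  induction r with
  | zero => simpa using two_not_dvd_one
  | succ r ih =>
    have e : 2*(r+1)+1 = (2*r+1) + 1 + 1 := by ring
    rw [e, Finset.sum_range_succ, Finset.sum_range_succ]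
    intro h
    apply ih (by omega)
    have h2 : (2:ℤ_[2]) ∣ Q^(2*r+1) + Q^(2*r+1+1) := by
      have e2 : Q^(2*r+1) + Q^(2*r+1+1) = Q^(2*r+1) * (1 + Q) := by ring
      rw [e2]
      exact Dvd.dvd.mul_left (odd_add_odd 1 Q two_not_dvd_one hQ) _
    have h3 := dvd_sub h h2
    have e3 : ∑ i ∈ Finset.range (2*r+1), Q^i
        = (∑ i ∈ Finset.range (2*r+1), Q^i + Q^(2*r+1) + Q^(2*r+1+1))
          - (Q^(2*r+1) + Q^(2*r+1+1)) := by ring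
    rw [e3]; exact h3

private lemma q_pow_two_pow {q t₁ : ℤ_[2]} (ht₁ : ¬ (2:ℤ_[2]) ∣ t₁) (hq : q - 1 = 2^3 * t₁) :
    ∀ n : ℕ, ∃ t, ¬ (2:ℤ_[2]) ∣ t ∧ q^(2^n) - 1 = 2^(3+n) * t := by
  intro n
  induction n with
  | zero => exact ⟨t₁, ht₁, by simpa using hq⟩
  | succ n ih =>
    obtain ⟨t, ht, he⟩ := ih
    have hplus : q^(2^n) + 1 = 2 * (2^(2+n)*t + 1) := by
      have e : q^(2^n) + 1 = (q^(2^n) - 1) + 2 := by ring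
      rw [e, he]; ring
    refine ⟨t * (2^(2+n)*t + 1), odd_mul' ht ?_, ?_⟩
    · intro h
      apply two_not_dvd_one
      have h2 : (2:ℤ_[2]) ∣ (2:ℤ_[2])^(2+n)*t := dvd_mul_of_dvd_left (dvd_pow_self 2 (by omega)) t
      have := dvd_sub h h2
      simpa using this
    · have e : q^(2^(n+1)) - 1 = (q^(2^n) - 1) * (q^(2^n) + 1) := by
        rw [pow_succ, pow_mul]; ring
      rw [e, he, hplus]; ring

private lemma q_pow_m {q t₁ : ℤ_[2]} (ht₁ : ¬ (2:ℤ_[2]) ∣ t₁) (hq : q - 1 = 2^3 * t₁)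
    (hq_odd : ¬ (2:ℤ_[2]) ∣ q) (m : ℕ) (hm : m ≠ 0) :
    ∃ t, ¬ (2:ℤ_[2]) ∣ t ∧ q^m - 1 = 2^(3 + padicValNat 2 m) * t := by
  set s := padicValNat 2 m with hs
  have hdvd : 2^s ∣ m := pow_padicValNat_dvd
  set c := m / 2^s with hc
  have hms : m = 2^s * c := (Nat.mul_div_cancel' hdvd).symm
  have hc_odd : ¬ 2 ∣ c := by
    intro h2
    obtain ⟨e, he⟩ := h2
    have : 2^(s+1) ∣ m := ⟨e, by rw [hms, he]; ring⟩
    have := (padicValNat_dvd_iff_le (p := 2) hm).mp this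
    omega
  obtain ⟨t, ht, he⟩ := q_pow_two_pow ht₁ hq s
  have hsum := odd_geom_sum (odd_pow' hq_odd (2^s)) hc_odd
  refine ⟨t * ∑ i ∈ Finset.range c, (q^(2^s))^i, odd_mul' ht hsum, ?_⟩
  calc q^m - 1 = (∑ i ∈ Finset.range c, (q^(2^s))^i) * (q^(2^s) - 1) := by
        rw [geom_sum_mul, ← pow_mul, ← hms]
    _ = 2^(3+s) * (t * ∑ i ∈ Finset.range c, (q^(2^s))^i) := by rw [he]; ring
open Filter Topology in
private lemma key (ω : ℤ_[2]) (hroot : ω ^ 2 - ω + 2 = 0) (hval : ω.valuation = 1)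
    (d : ℤ) (hd_odd : ¬ (2:ℤ) ∣ d) (hd1 : (8:ℤ) ∣ d - 1) (j₀ : ℕ)
    (hanchor : (2:ℤ_[2])^5 ∣ ((1 - ω)^(2*j₀+1) + (d:ℤ_[2]) * (1 - 2*ω))) :
    ∃ W : ℤ_[2], (4:ℤ_[2]) ∣ ((j₀:ℤ_[2]) - W) ∧ ∀ j : ℕ,
      ((1 - ω)^(2*j+1) + (d:ℤ_[2]) * (1 - 2*ω)).valuation = 3 + ((j:ℤ_[2]) - W).valuation := by
  classical
  obtain ⟨ε, u, hωε, hεu, hεodd⟩ := eps_setup ω hroot hval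
  have hω : ω = 6 + 32*u := by rw [hωε, hεu]; ring
  set F : ℕ → ℤ_[2] := fun j => (1 - ω)^(2*j+1) + (d:ℤ_[2]) * (1 - 2*ω) with hFdef
  set b : ℤ_[2] := 1 - ω with hbdef
  set q : ℤ_[2] := b^2 with hqdef
  have h2ω : (2:ℤ_[2]) ∣ ω := ⟨ε, hωε⟩
  have hb_odd : ¬ (2:ℤ_[2]) ∣ b := by
    intro h
    apply two_not_dvd_one
    have e : (1:ℤ_[2]) = b + ω := by rw [hbdef]; ring
    rw [e]; exact dvd_add h h2ω
  have hq_odd : ¬ (2:ℤ_[2]) ∣ q := odd_pow' hb_odd 2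
  have hqt : q - 1 = 2^3 * (-(1+4*u)) := by
    rw [hqdef, hbdef]
    linear_combination hroot - hω
  have ht₁odd : ¬ (2:ℤ_[2]) ∣ (-(1+4*u)) := by
    rw [dvd_neg]
    intro h
    apply two_not_dvd_one
    have e : (1:ℤ_[2]) = (1+4*u) - 2*(2*u) := by ring
    rw [e]; exact dvd_sub h ⟨2*u, rfl⟩
  have hFq : ∀ j, F j = b * q^j + (d:ℤ_[2])*(1-2*ω) := by
    intro j
    rw [hFdef, hqdef, hbdef]
    simp only []
    rw [pow_succ, pow_mul]
    ring
  have hdiff : ∀ j m : ℕ, F (j+m) - F j = b * q^j * (q^m - 1) := by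
    intro j m
    rw [hFq, hFq, pow_add]; ring
  obtain ⟨e, he⟩ := hd1
  have hde : (d:ℤ_[2]) = 1 + 8*(e:ℤ_[2]) := by
    have : d = 1 + 8*e := by omega
    rw [this]; push_cast; ring
  have hbase : (2:ℤ_[2])^3 ∣ F 0 := by
    refine ⟨-2 - 12*u + (e:ℤ_[2])*(1-2*ω), ?_⟩
    rw [hFq 0]
    rw [pow_zero, hbdef]
    linear_combination (1-2*ω)*hde - 3*hω
  -- the approximating sequence
  set J : ℕ → ℕ := fun n => Nat.rec 0
    (fun n jn => if (2:ℤ_[2])^(3+(n+1)) ∣ F jn then jn else jn + 2^n) n with hJdef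
  have hJsucc : ∀ n, J (n+1) = if (2:ℤ_[2])^(3+(n+1)) ∣ F (J n) then J n else J n + 2^n := by
    intro n; rfl
  have hJdvd : ∀ n, (2:ℤ_[2])^(3+n) ∣ F (J n) := by
    intro n
    induction n with
    | zero => show (2:ℤ_[2])^(3+0) ∣ F 0; simpa using hbase
    | succ n ih =>
      rw [hJsucc]
      split_ifs with h
      · exact h
      · obtain ⟨s, hs⟩ := ih
        have hsodd : ¬ (2:ℤ_[2]) ∣ s := by
          intro h2
          apply h
          obtain ⟨w, hw⟩ := h2
          exact ⟨w, by rw [hs, hw]; ring⟩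
        obtain ⟨t, ht, hQ⟩ := q_pow_two_pow ht₁odd hqt n
        have hF2 : F (J n + 2^n) = 2^(3+n) * (s + b*q^(J n)*t) := by
          have hd2 := hdiff (J n) (2^n)
          have : F (J n + 2^n) = F (J n) + b * q^(J n) * (q^(2^n) - 1) := by
            rw [← hd2]; ring
          rw [this, hs, hQ]; ring
        obtain ⟨w, hw⟩ := odd_add_odd s (b*q^(J n)*t) hsodd
          (odd_mul' (odd_mul' hb_odd (odd_pow' hq_odd _)) ht)
        exact ⟨w, by rw [hF2, hw]; ring⟩
  have hJconn : ∀ n, (2:ℤ_[2])^n ∣ ((J (n+1) : ℤ_[2]) - (J n : ℤ_[2])) := by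
    intro n
    rw [hJsucc]
    split_ifs with h
    · simp
    · push_cast
      exact ⟨1, by ring⟩
  have hJle : ∀ n m : ℕ, n ≤ m → (2:ℤ_[2])^n ∣ ((J m : ℤ_[2]) - (J n : ℤ_[2])) := by
    intro n m hnm
    induction m, hnm using Nat.le_induction with
    | base => simp
    | succ m hnm ih =>
      have e : ((J (m+1) : ℤ_[2]) - J n) = ((J (m+1):ℤ_[2]) - J m) + ((J m : ℤ_[2]) - J n) := by
        ring
      rw [e]
      exact dvd_add ((pow_dvd_pow 2 (by omega : n ≤ m)).trans (hJconn m)) ih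
  -- the limit W
  have hcs : CauchySeq (fun n => ((J n : ℤ_[2]))) := by
    apply cauchySeq_of_le_geometric (1/2 : ℝ) 1 (by norm_num)
    intro n
    rw [dist_eq_norm, norm_sub_rev]
    calc ‖((J (n+1) : ℤ_[2]) - J n)‖ ≤ (2:ℝ)^(-n:ℤ) := norm_le_of_dvd (hJconn n)
      _ = 1 * (1/2)^n := by
          rw [zpow_neg, zpow_natCast, one_mul, div_pow, one_pow, one_div]
  obtain ⟨W, hW⟩ := cauchySeq_tendsto_of_complete hcs
  have hWn : ∀ n, (2:ℤ_[2])^n ∣ ((J n : ℤ_[2]) - W) := by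
    intro n
    apply dvd_of_norm_le
    have h1 : Tendsto (fun m => ((J n:ℤ_[2]) - (J m:ℤ_[2]))) atTop (𝓝 ((J n:ℤ_[2]) - W)) :=
      tendsto_const_nhds.sub hW
    apply le_of_tendsto h1.norm
    filter_upwards [eventually_ge_atTop n] with m hm
    rw [norm_sub_rev]
    exact norm_le_of_dvd (hJle n m hm)
  -- difference estimates
  have hFdvd_of : ∀ (j j' n : ℕ), (2:ℤ_[2])^n ∣ ((j:ℤ_[2]) - (j':ℤ_[2])) →
      (2:ℤ_[2])^(3+n) ∣ (F j - F j') := by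
    have main : ∀ (j' m n : ℕ), (2:ℤ_[2])^n ∣ ((m:ℕ):ℤ_[2]) →
        (2:ℤ_[2])^(3+n) ∣ (F (j'+m) - F j') := by
      intro j' m n hm
      have hmn : (2^n : ℕ) ∣ m := by
        have h1 := (int_dvd_iff n (m:ℤ)).mp (by exact_mod_cast hm)
        exact_mod_cast h1
      obtain ⟨c, rfl⟩ := hmn
      have hdvd2 : (q^(2^n) - 1) ∣ (q^(2^n*c) - 1) := by
        rw [pow_mul]
        simpa using sub_dvd_pow_sub_pow (q^(2^n)) 1 c
      obtain ⟨t, ht, hQ⟩ := q_pow_two_pow ht₁odd hqt n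
      rw [hdiff]
      apply Dvd.dvd.mul_left
      exact (by rw [hQ] at hdvd2; exact (Dvd.intro t rfl).trans hdvd2)
    intro j j' n h
    rcases le_total j' j with hle | hle
    · obtain ⟨m, rfl⟩ := Nat.exists_eq_add_of_le hle
      apply main
      have e : ((j' + m : ℕ):ℤ_[2]) - (j':ℤ_[2]) = ((m:ℕ):ℤ_[2]) := by push_cast; ring
      rwa [e] at h
    · obtain ⟨m, rfl⟩ := Nat.exists_eq_add_of_le hle
      rw [← dvd_neg, neg_sub]
      apply main
      have e : ((j:ℕ):ℤ_[2]) - ((j + m : ℕ):ℤ_[2]) = -((m:ℕ):ℤ_[2]) := by push_cast; ring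
      rw [e, dvd_neg] at h
      exact h
  -- exact difference valuation: if ¬ 2^n ∣ j - j' then F j - F j' is 2^{3+s} * odd with s < n
  have hFexact : ∀ (j j' n : ℕ), ¬ (2:ℤ_[2])^n ∣ ((j:ℤ_[2]) - (j':ℤ_[2])) →
      ¬ (2:ℤ_[2])^(3+n) ∣ (F j - F j') := by
    have main : ∀ (j' m n : ℕ), m ≠ 0 → ¬ (2:ℤ_[2])^n ∣ ((m:ℕ):ℤ_[2]) →
        ¬ (2:ℤ_[2])^(3+n) ∣ (F (j'+m) - F j') := by
      intro j' m n hm0 hm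
      set s := padicValNat 2 m with hs
      have hslt : s < n := by
        by_contra hsge
        apply hm
        have h1 : (2^n:ℕ) ∣ m := (pow_dvd_pow 2 (by omega)).trans pow_padicValNat_dvd
        obtain ⟨c, rfl⟩ := h1
        push_cast
        exact Dvd.dvd.mul_right (by norm_num) _
      obtain ⟨t, ht, hE⟩ := q_pow_m ht₁odd hqt hq_odd m hm0
      have hEF : F (j'+m) - F j' = 2^(3+s) * (b * q^j' * t) := by
        rw [hdiff, hE]; ring
      intro hdv
      have hstep : (2:ℤ_[2])^((3+s)+1) ∣ (F (j'+m) - F j') :=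
        (pow_dvd_pow 2 (by omega)).trans hdv
      exact not_dvd_succ_of_E (odd_mul' (odd_mul' hb_odd (odd_pow' hq_odd _)) ht) hEF hstep
    intro j j' n h hdvF
    rcases le_total j' j with hle | hle
    · obtain ⟨m, rfl⟩ := Nat.exists_eq_add_of_le hle
      have e : ((j' + m : ℕ):ℤ_[2]) - (j':ℤ_[2]) = ((m:ℕ):ℤ_[2]) := by push_cast; ring
      rw [e] at h
      have hm0 : m ≠ 0 := by rintro rfl; exact h (by simpa using dvd_zero _)
      exact main j' m n hm0 h hdvF
    · obtain ⟨m, rfl⟩ := Nat.exists_eq_add_of_le hle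
      have e : ((j:ℕ):ℤ_[2]) - ((j + m : ℕ):ℤ_[2]) = -((m:ℕ):ℤ_[2]) := by push_cast; ring
      rw [e, dvd_neg] at h
      have hm0 : m ≠ 0 := by rintro rfl; exact h (by simpa using dvd_zero _)
      rw [← dvd_neg, neg_sub] at hdvF
      exact main j m n hm0 h hdvF
  -- characterization
  have hchar : ∀ (j n : ℕ), ((2:ℤ_[2])^(3+n) ∣ F j ↔ (2:ℤ_[2])^n ∣ ((j:ℤ_[2]) - W)) := by
    intro j n
    constructor
    · intro hFj
      by_contra hnd
      have hnd' : ¬ (2:ℤ_[2])^n ∣ ((j:ℤ_[2]) - (J n:ℤ_[2])) := by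
        intro h
        apply hnd
        have e : (j:ℤ_[2]) - W = ((j:ℤ_[2]) - (J n:ℤ_[2])) + ((J n:ℤ_[2]) - W) := by ring
        rw [e]
        exact dvd_add h (hWn n)
      exact hFexact j (J n) n hnd' (dvd_sub hFj (hJdvd n))
    · intro h
      have h2 : (2:ℤ_[2])^n ∣ ((j:ℤ_[2]) - (J n:ℤ_[2])) := by
        have e : (j:ℤ_[2]) - (J n:ℤ_[2]) = ((j:ℤ_[2]) - W) - ((J n:ℤ_[2]) - W) := by ring
        rw [e]
        exact dvd_sub h (hWn n)
      have h3 := hFdvd_of j (J n) n h2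
      have e : F j = (F j - F (J n)) + F (J n) := by ring
      rw [e]
      exact dvd_add h3 (hJdvd n)
  -- nonvanishing
  have hAB : ∀ n:ℕ, ∃ A B : ℤ, (1-ω)^n = (A:ℤ_[2]) + (B:ℤ_[2])*ω
      ∧ ω^n = (A:ℤ_[2]) + (B:ℤ_[2])*(1-ω) := by
    intro n
    induction n with
    | zero => exact ⟨1, 0, by norm_num, by norm_num⟩
    | succ n ih =>
      obtain ⟨A, B, h1, h2⟩ := ih
      refine ⟨A + 2*B, -A, ?_, ?_⟩
      · push_cast
        rw [pow_succ]
        linear_combination (1-ω)*h1 - (B:ℤ_[2])*hroot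
      · push_cast
        rw [pow_succ]
        linear_combination ω*h2 - (B:ℤ_[2])*hroot
  have hF0 : ∀ j:ℕ, F j ≠ 0 := by
    intro j h0
    obtain ⟨A, B, h1, h2⟩ := hAB (2*j+1)
    have h0' : (1-ω)^(2*j+1) + (d:ℤ_[2])*(1-2*ω) = 0 := h0
    set a' : ℤ := A + d with ha'
    set b' : ℤ := B - 2*d with hb'
    have hab : (a':ℤ_[2]) + (b':ℤ_[2])*ω = 0 := by
      push_cast [ha', hb']
      linear_combination h0' - h1
    have hprod : ((a'^2 + a'*b' + 2*b'^2 : ℤ) : ℤ_[2]) = 0 := by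
      have e : ((a':ℤ_[2]) + (b':ℤ_[2])*ω) * ((a':ℤ_[2]) + (b':ℤ_[2])*(1-ω))
          = ((a'^2 + a'*b' + 2*b'^2 : ℤ):ℤ_[2]) := by
        push_cast
        linear_combination (-((b':ℤ_[2]))^2)*hroot
      rw [← e, hab, zero_mul]
    have hZ : a'^2 + a'*b' + 2*b'^2 = 0 := by exact_mod_cast hprod
    have hb'0 : b' = 0 := by nlinarith [sq_nonneg (2*a'+b'), sq_nonneg b']
    have ha'0 : a' = 0 := by nlinarith
    have hA : A = -d := by omega
    have hB : B = 2*d := by omega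
    have hmul : (2:ℤ_[2])^(2*j+1) = ((7*d^2 : ℤ):ℤ_[2]) := by
      have e1 : ((2:ℤ_[2]))^(2*j+1) = (ω*(1-ω))^(2*j+1) := by
        rw [show ω*(1-ω) = (2:ℤ_[2]) from by linear_combination -hroot]
      have h0'' : (1-ω)^(2*j+1) = -((d:ℤ_[2]))*(1-2*ω) := by linear_combination h0'
      rw [e1, mul_pow, h2, hA, hB, h0'']
      push_cast
      linear_combination (-4*(d:ℤ_[2])^2)*hroot
    have h2dvd : (2:ℤ_[2]) ∣ ((7*d^2:ℤ):ℤ_[2]) := by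
      rw [← hmul]
      exact dvd_pow_self 2 (Nat.succ_ne_zero _)
    have h2int : (2:ℤ) ∣ 7*d^2 := by
      have := (int_dvd_iff 1 (7*d^2)).mp (by rwa [pow_one])
      simpa using this
    rcases (Int.prime_two.dvd_mul.mp h2int) with h | h
    · norm_num at h
    · exact hd_odd (Int.prime_two.dvd_of_dvd_pow h)
  have hjW : ∀ j : ℕ, (j:ℤ_[2]) - W ≠ 0 := by
    intro j h0
    have hall : ∀ n:ℕ, (2:ℤ_[2])^(3+n) ∣ F j :=
      fun n => (hchar j n).mpr (by rw [h0]; exact dvd_zero _)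
    have hnn : (0:ℤ) ≤ ((F j).valuation : ℤ) := Nat.cast_nonneg _
    have hv := (dvd_iff_le_val (hF0 j) (3 + ((F j).valuation : ℤ).toNat)).mp (hall _)
    rw [Nat.cast_add, Int.toNat_of_nonneg hnn] at hv
    omega
  refine ⟨W, ?_, ?_⟩
  · have h4 := (hchar j₀ 2).mp (by
      have : (3+2) = 5 := by norm_num
      rw [this]
      exact hanchor)
    rwa [show ((2:ℤ_[2])^2 : ℤ_[2]) = 4 by norm_num] at h4
  · intro j
    show (F j).valuation = 3 + ((j:ℤ_[2]) - W).valuation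
    set N : ℤ := (((j:ℤ_[2]) - W).valuation : ℤ) with hN
    have hN0 : 0 ≤ N := Nat.cast_nonneg _
    have hdvdN : (2:ℤ_[2])^(N.toNat) ∣ ((j:ℤ_[2]) - W) :=
      (dvd_iff_le_val (hjW j) _).mpr (by omega)
    have h1 : (2:ℤ_[2])^(3+N.toNat) ∣ F j := (hchar j N.toNat).mpr hdvdN
    have h2 : ¬ (2:ℤ_[2])^(N.toNat+1) ∣ ((j:ℤ_[2]) - W) := by
      intro h
      have := (dvd_iff_le_val (hjW j) _).mp h
      rw [Nat.cast_add] at this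
      omega
    have h3 : ¬ (2:ℤ_[2])^(3+(N.toNat+1)) ∣ F j := fun h => h2 ((hchar j (N.toNat+1)).mp h)
    have hv1 : ((3+N.toNat : ℕ):ℤ) ≤ (F j).valuation := (dvd_iff_le_val (hF0 j) _).mp h1
    have hv2 : ¬ ((3+(N.toNat+1) : ℕ):ℤ) ≤ (F j).valuation := fun h =>
      h3 ((dvd_iff_le_val (hF0 j) _).mpr h)
    have hNt : ((N.toNat:ℤ)) = N := Int.toNat_of_nonneg hN0
    rw [show ((3+N.toNat:ℕ):ℤ) = 3 + (N.toNat:ℤ) from by push_cast; ring, hNt] at hv1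
    rw [show ((3+(N.toNat+1):ℕ):ℤ) = 3 + ((N.toNat:ℤ)+1) from by push_cast; ring, hNt] at hv2
    omega

private lemma dvd_iff_toZModPow (n : ℕ) (x : ℤ_[2]) :
    (2:ℤ_[2])^n ∣ x ↔ PadicInt.toZModPow n x = 0 := by
  rw [← RingHom.mem_ker, PadicInt.ker_toZModPow, Ideal.mem_span_singleton, hp2]

/-- Let `ω ∈ ℤ₂` be the root of `x² - x + 2` with `v₂(ω) = 1` and `ω̄ = 1 - ω`.
Then (a) there is `Ω ∈ ℤ₂` with `Ω ≡ 3 (mod 4ℤ₂)` such that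
`v₂(ω̄^(2k-1) + (1-2ω)) = 3 + v₂(k - Ω)` for all `k ≥ 1`, and
(b) there is `Ω₈ ∈ ℤ₂` with `Ω₈ ≡ 2 (mod 4ℤ₂)` such that
`v₂(ω̄^(2k-1) + 9(1-2ω)) = 3 + v₂(k - Ω₈)` for all `k ≥ 1`. -/
theorem exists_Omega_and_Omega8 (ω : ℤ_[2]) (hroot : ω ^ 2 - ω + 2 = 0)
    (hval : ω.valuation = 1) :
    (∃ Ω : ℤ_[2], (4 : ℤ_[2]) ∣ (Ω - 3) ∧ ∀ k : ℕ, 1 ≤ k →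
        ((1 - ω) ^ (2 * k - 1) + (1 - 2 * ω)).valuation = 3 + ((k : ℤ_[2]) - Ω).valuation) ∧
    (∃ Ω₈ : ℤ_[2], (4 : ℤ_[2]) ∣ (Ω₈ - 2) ∧ ∀ k : ℕ, 1 ≤ k →
        ((1 - ω) ^ (2 * k - 1) + 9 * (1 - 2 * ω)).valuation =
          3 + ((k : ℤ_[2]) - Ω₈).valuation) := by
  obtain ⟨ε, u, hωε, hεu, hεodd⟩ := eps_setup ω hroot hval
  have hω : ω = 6 + 32*u := by rw [hωε, hεu]; ring
  have hw : PadicInt.toZModPow 5 ω = 6 := by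
    have h32 : (2:ℤ_[2])^5 ∣ (ω - 6) := ⟨u, by linear_combination hω⟩
    have h0 := (dvd_iff_toZModPow 5 (ω - 6)).mp h32
    rw [map_sub] at h0
    have h6 : PadicInt.toZModPow 5 (6:ℤ_[2]) = 6 := by rw [map_ofNat]
    rw [h6] at h0
    exact sub_eq_zero.mp h0
  constructor
  · -- part (a)
    have hanchor : (2:ℤ_[2])^5 ∣ ((1 - ω)^(2*2+1) + ((1:ℤ):ℤ_[2]) * (1 - 2*ω)) := by
      rw [dvd_iff_toZModPow]
      simp only [map_add, map_pow, map_sub, map_mul, map_one, map_ofNat, Int.cast_one,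
        Int.cast_ofNat, hw]
      decide
    obtain ⟨W, hW4, hWval⟩ := key ω hroot hval 1 (by norm_num) (by norm_num) 2 hanchor
    refine ⟨W + 1, ?_, ?_⟩
    · have e : (W + 1) - 3 = -(((2:ℕ):ℤ_[2]) - W) := by push_cast; ring
      rw [e, dvd_neg]
      exact hW4
    · intro k hk
      have h1 := hWval (k-1)
      have e1 : 2*(k-1)+1 = 2*k-1 := by omega
      have e2 : (((k-1:ℕ)):ℤ_[2]) - W = (k:ℤ_[2]) - (W+1) := by
        rw [Nat.cast_sub hk]; push_cast; ring
      rw [e1, e2] at h1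
      rw [← h1]
      norm_num
  · -- part (b)
    have hanchor : (2:ℤ_[2])^5 ∣ ((1 - ω)^(2*1+1) + ((9:ℤ):ℤ_[2]) * (1 - 2*ω)) := by
      rw [dvd_iff_toZModPow]
      simp only [map_add, map_pow, map_sub, map_mul, map_one, map_ofNat, Int.cast_one,
        Int.cast_ofNat, hw]
      decide
    obtain ⟨W, hW4, hWval⟩ := key ω hroot hval 9 (by norm_num) (by norm_num) 1 hanchor
    refine ⟨W + 1, ?_, ?_⟩
    · have e : (W + 1) - 2 = -(((1:ℕ):ℤ_[2]) - W) := by push_cast; ring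
      rw [e, dvd_neg]
      exact hW4
    · intro k hk
      have h1 := hWval (k-1)
      have e1 : 2*(k-1)+1 = 2*k-1 := by omega
      have e2 : (((k-1:ℕ)):ℤ_[2]) - W = (k:ℤ_[2]) - (W+1) := by
        rw [Nat.cast_sub hk]; push_cast; ring
      rw [e1, e2] at h1
      rw [← h1]
      norm_num
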